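/- Let p ∈ (0,1), d ≥ 2, and θ* ∈ (0,π). Let M ≥ 1, let α₁ = 1, and let α₂, …, α_M be positive integers with sin(α_m θ*) ≠ 0 for every m. Define for each positive integer α the success probability P_α(θ) := 1/2 − (p^{α}/2) cos(α θ) if α is odd, and P_α(θ) := (d−1)/d + p^{α}(sin²(αθ/2) − (d−1)/d) if α is even. For each N, let Y_N^{(1)}, …, Y_N^{(M)} be independent binomial random variables with Y_N^{(m)} ~ Bin(N, P_{α_m}(θ*)). Then for every δ > 0, the probability of the event that the product likelihood θ ↦ ∏_{m=1}^{M} P_{α_m}(θ)^{Y_N^{(m)}} (1 − P_{α_m}(θ))^{N − Y_N^{(m)}} attains a unique global maximum over (0,π) at a point θ̂ satisfying |θ̂ − θ*| < δ tends to 1 as N → ∞. -/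

import Mathlib

open Filter Real

open scoped Classical

set_option maxHeartbeats 1600000



private lemma gibbs_le {q x : ℝ} (hq0 : 0 < q) (hq1 : q < 1) (hx0 : 0 < x) (hx1 : x < 1) :
    q * Real.log x + (1 - q) * Real.log (1 - x) ≤
      q * Real.log q + (1 - q) * Real.log (1 - q) := by
  have h1 : Real.log (x / q) ≤ x / q - 1 := Real.log_le_sub_one_of_pos (div_pos hx0 hq0)
  have h2 : Real.log ((1 - x) / (1 - q)) ≤ (1 - x) / (1 - q) - 1 :=
    Real.log_le_sub_one_of_pos (div_pos (by linarith) (by linarith))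
  rw [Real.log_div hx0.ne' hq0.ne'] at h1
  rw [Real.log_div (by linarith : (1:ℝ) - x ≠ 0) (by linarith : (1:ℝ) - q ≠ 0)] at h2
  have e1 : q * (x / q - 1) = x - q := by field_simp
  have hq' : (1:ℝ) - q ≠ 0 := by linarith
  have e2 : (1 - q) * ((1 - x) / (1 - q) - 1) = q - x := by
    field_simp
    ring
  nlinarith [mul_le_mul_of_nonneg_left h1 hq0.le,
    mul_le_mul_of_nonneg_left h2 (by linarith : (0:ℝ) ≤ 1 - q)]

private lemma gibbs_lt {q x : ℝ} (hq0 : 0 < q) (hq1 : q < 1) (hx0 : 0 < x) (hx1 : x < 1)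
    (hne : x ≠ q) :
    q * Real.log x + (1 - q) * Real.log (1 - x) <
      q * Real.log q + (1 - q) * Real.log (1 - q) := by
  have h1 : Real.log (x / q) < x / q - 1 := by
    apply Real.log_lt_sub_one_of_pos (div_pos hx0 hq0)
    intro h
    exact hne (by rwa [div_eq_one_iff_eq hq0.ne'] at h)
  have h2 : Real.log ((1 - x) / (1 - q)) ≤ (1 - x) / (1 - q) - 1 :=
    Real.log_le_sub_one_of_pos (div_pos (by linarith) (by linarith))
  rw [Real.log_div hx0.ne' hq0.ne'] at h1
  rw [Real.log_div (by linarith : (1:ℝ) - x ≠ 0) (by linarith : (1:ℝ) - q ≠ 0)] at h2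
  have e1 : q * (x / q - 1) = x - q := by field_simp
  have hq' : (1:ℝ) - q ≠ 0 := by linarith
  have e2 : (1 - q) * ((1 - x) / (1 - q) - 1) = q - x := by
    field_simp
    ring
  nlinarith [mul_lt_mul_of_pos_left h1 hq0,
    mul_le_mul_of_nonneg_left h2 (by linarith : (0:ℝ) ≤ 1 - q)]


private noncomputable def gfun {M : ℕ} (f : Fin M → ℝ → ℝ) (v : Fin M → ℝ) (x : ℝ) : ℝ :=
  ∑ m, (v m * Real.log (f m x) + (1 - v m) * Real.log (1 - f m x))

private noncomputable def phifun {M : ℕ} (f f' : Fin M → ℝ → ℝ) (v : Fin M → ℝ)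
    (m : Fin M) (x : ℝ) : ℝ :=
  v m * (f' m x / f m x) + (1 - v m) * (-f' m x / (1 - f m x))

private noncomputable def psifun {M : ℕ} (f f' f'' : Fin M → ℝ → ℝ) (v : Fin M → ℝ)
    (m : Fin M) (x : ℝ) : ℝ :=
  v m * ((f'' m x * f m x - f' m x * f' m x) / f m x ^ 2)
    + (1 - v m) * ((-f'' m x * (1 - f m x) - -f' m x * -f' m x) / (1 - f m x) ^ 2)

private noncomputable def Afun {M : ℕ} (f f' f'' : Fin M → ℝ → ℝ) (m : Fin M) (x : ℝ) : ℝ :=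
  (f'' m x * f m x - f' m x * f' m x) / f m x ^ 2
    - (-f'' m x * (1 - f m x) - -f' m x * -f' m x) / (1 - f m x) ^ 2

private lemma core_mle (M : ℕ) (f f' f'' : Fin M → ℝ → ℝ) (c0 : ℝ)
    (hc0 : 0 < c0) (hc0' : c0 ≤ 1 / 2)
    (hb : ∀ m x, c0 ≤ f m x ∧ f m x ≤ 1 - c0)
    (hd1 : ∀ m x, HasDerivAt (f m) (f' m x) x)
    (hd2 : ∀ m x, HasDerivAt (f' m) (f'' m x) x)
    (hcont2 : ∀ m, Continuous (f'' m))
    (θs : ℝ) (hθ0 : 0 < θs) (hθπ : θs < Real.pi)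
    (m0 : Fin M) (hinj : Set.InjOn (f m0) (Set.Icc 0 Real.pi))
    (hder0 : f' m0 θs ≠ 0)
    (δ : ℝ) (hδ : 0 < δ) :
    ∃ ε > 0, ∀ v : Fin M → ℝ, (∀ m, |v m - f m θs| ≤ ε) →
      ∃ θhat ∈ Set.Ioo (0:ℝ) Real.pi, |θhat - θs| < δ ∧
        ∀ x ∈ Set.Icc (0:ℝ) Real.pi, x ≠ θhat →
          gfun f v x < gfun f v θhat := by
  classical
  have hπ := Real.pi_pos
  have hf0 : ∀ m x, 0 < f m x := fun m x => lt_of_lt_of_le hc0 (hb m x).1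
  have hf1 : ∀ m x, 0 < 1 - f m x := fun m x => by have := (hb m x).2; linarith
  have hflt1 : ∀ m x, f m x < 1 := fun m x => by have := hf1 m x; linarith
  have hcf : ∀ m, Continuous (f m) :=
    fun m => Differentiable.continuous (fun x => (hd1 m x).differentiableAt)
  have hcf' : ∀ m, Continuous (f' m) :=
    fun m => Differentiable.continuous (fun x => (hd2 m x).differentiableAt)
  set q : Fin M → ℝ := fun m => f m θs with hq
  -- continuity of g v
  have hgc : ∀ v, Continuous (gfun f v) := by
    intro v
    apply continuous_finset_sum
    intro m _
    exact ((continuous_const.mul ((hcf m).log (fun x => (hf0 m x).ne'))).add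
      (continuous_const.mul (((continuous_const.sub (hcf m)).log
        (fun x => (hf1 m x).ne')))))
  -- first derivative
  have hgd1 : ∀ v x, HasDerivAt (gfun f v) (∑ m, phifun f f' v m x) x := by
    intro v x
    apply HasDerivAt.fun_sum
    intro m _
    have h1 : HasDerivAt (fun y => Real.log (f m y)) (f' m x / f m x) x :=
      (hd1 m x).log (hf0 m x).ne'
    have h2 : HasDerivAt (fun y => Real.log (1 - f m y)) (-f' m x / (1 - f m x)) x :=
      ((hd1 m x).const_sub 1).log (hf1 m x).ne'
    exact (h1.const_mul (v m)).add (h2.const_mul (1 - v m))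
  -- second derivative
  have hφd : ∀ v m x, HasDerivAt (phifun f f' v m) (psifun f f' f'' v m x) x := by
    intro v m x
    have h1 : HasDerivAt (fun y => f' m y / f m y)
        ((f'' m x * f m x - f' m x * f' m x) / f m x ^ 2) x :=
      (hd2 m x).div (hd1 m x) (hf0 m x).ne'
    have h2 : HasDerivAt (fun y => -f' m y / (1 - f m y))
        ((-f'' m x * (1 - f m x) - -f' m x * -f' m x) / (1 - f m x) ^ 2) x :=
      ((hd2 m x).neg).div ((hd1 m x).const_sub 1) (hf1 m x).ne'
    exact (h1.const_mul (v m)).add (h2.const_mul (1 - v m))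
  have hg2 : ∀ v x, deriv^[2] (gfun f v) x = ∑ m, psifun f f' f'' v m x := by
    intro v x
    have hderiv1 : deriv (gfun f v) = fun y => ∑ m, phifun f f' v m y :=
      funext fun y => (hgd1 v y).deriv
    have h2 : deriv^[2] (gfun f v) = deriv (deriv (gfun f v)) := by
      simp [Function.iterate_succ_apply', Function.iterate_one]
    rw [h2, hderiv1]
    exact (HasDerivAt.fun_sum (fun m _ => hφd v m x)).deriv
  -- value of psi at q
  have hψval : ∀ m x, psifun f f' f'' (fun m => f m x) m x
      = -(f' m x ^ 2) / (f m x * (1 - f m x)) := by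
    intro m x
    have h0 := (hf0 m x).ne'
    have h1 := (hf1 m x).ne'
    unfold psifun
    field_simp
    ring
  have hGneg : (∑ m, psifun f f' f'' q m θs) < 0 := by
    have : ∀ m, psifun f f' f'' q m θs = -(f' m θs ^ 2) / (f m θs * (1 - f m θs)) :=
      fun m => hψval m θs
    calc (∑ m, psifun f f' f'' q m θs) < ∑ _m : Fin M, (0:ℝ) := by
          apply Finset.sum_lt_sum
          · intro m _
            rw [this m]
            apply div_nonpos_of_nonpos_of_nonneg (by nlinarith [sq_nonneg (f' m θs)])
            exact le_of_lt (mul_pos (hf0 m θs) (hf1 m θs))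
          · refine ⟨m0, Finset.mem_univ _, ?_⟩
            rw [this m0]
            apply div_neg_of_neg_of_pos
            · have : 0 < f' m0 θs ^ 2 :=
                lt_of_le_of_ne (sq_nonneg _) (Ne.symm (pow_ne_zero 2 hder0))
              linarith
            · exact mul_pos (hf0 m0 θs) (hf1 m0 θs)
      _ = 0 := by simp
  set c : ℝ := -(∑ m, psifun f f' f'' q m θs) / 2 with hcdef
  have hcpos : 0 < c := by
    rw [hcdef]; linarith
  -- continuity of G := sum of psi at q
  have hGcont : Continuous (fun x => ∑ m, psifun f f' f'' q m x) := by
    apply continuous_finset_sum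
    intro m _
    unfold psifun
    apply Continuous.add
    · apply Continuous.mul continuous_const
      apply Continuous.div
      · exact ((hcont2 m).mul (hcf m)).sub ((hcf' m).mul (hcf' m))
      · exact (hcf m).pow 2
      · exact fun x => pow_ne_zero 2 (hf0 m x).ne'
    · apply Continuous.mul continuous_const
      apply Continuous.div
      · exact (((hcont2 m).neg).mul (continuous_const.sub (hcf m))).sub
          (((hcf' m).neg).mul ((hcf' m).neg))
      · exact (continuous_const.sub (hcf m)).pow 2
      · exact fun x => pow_ne_zero 2 (hf1 m x).ne'
  -- choose r0 where G < -c
  have hev : ∀ᶠ x in nhds θs, (∑ m, psifun f f' f'' q m x) < -c := by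
    apply (hGcont.tendsto θs).eventually_lt_const
    rw [hcdef]; linarith
  obtain ⟨r0, hr0pos, hr0⟩ := Metric.eventually_nhds_iff.mp hev
  set r : ℝ := min (min (r0 / 2) (min (θs / 2) ((Real.pi - θs) / 2))) (δ / 2) with hrdef
  have hrpos : 0 < r := by
    rw [hrdef]
    apply lt_min (lt_min (by linarith) (lt_min (by linarith) (by linarith))) (by linarith)
  have hrr0 : r < r0 := lt_of_le_of_lt (le_trans (min_le_left _ _) (min_le_left _ _)) (by linarith)
  have hrθ : r < θs := by
    have : r ≤ θs / 2 := le_trans (min_le_left _ _) (le_trans (min_le_right _ _) (min_le_left _ _))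
    linarith
  have hrπ : r < Real.pi - θs := by
    have : r ≤ (Real.pi - θs) / 2 :=
      le_trans (min_le_left _ _) (le_trans (min_le_right _ _) (min_le_right _ _))
    linarith
  have hrδ : r < δ := lt_of_le_of_lt (min_le_right _ _) (by linarith)
  set J : Set ℝ := Set.Icc (θs - r) (θs + r) with hJdef
  have hθsJ : θs ∈ J := by constructor <;> simp <;> linarith
  have hGJ : ∀ x ∈ J, (∑ m, psifun f f' f'' q m x) < -c := by
    intro x hx
    apply hr0
    rw [Real.dist_eq, abs_sub_lt_iff]
    obtain ⟨h1, h2⟩ := hx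
    constructor <;> linarith
  -- bound on A on J
  have hcA : ∀ m, Continuous (Afun f f' f'' m) := by
    intro m
    unfold Afun
    apply Continuous.sub
    · apply Continuous.div
      · exact ((hcont2 m).mul (hcf m)).sub ((hcf' m).mul (hcf' m))
      · exact (hcf m).pow 2
      · exact fun x => pow_ne_zero 2 (hf0 m x).ne'
    · apply Continuous.div
      · exact (((hcont2 m).neg).mul (continuous_const.sub (hcf m))).sub
          (((hcf' m).neg).mul ((hcf' m).neg))
      · exact (continuous_const.sub (hcf m)).pow 2
      · exact fun x => pow_ne_zero 2 (hf1 m x).ne'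
  have hCA : ∀ m : Fin M, ∃ C : ℝ, ∀ x ∈ J, |Afun f f' f'' m x| ≤ C := by
    intro m
    obtain ⟨C, hC⟩ := isCompact_Icc.exists_bound_of_continuousOn (hcA m).continuousOn
    exact ⟨C, fun x hx => by simpa using hC x hx⟩
  choose CA hCAspec using hCA
  have hCA0 : ∀ m, 0 ≤ CA m := fun m => le_trans (abs_nonneg _) (hCAspec m θs hθsJ)
  set CAs : ℝ := ∑ m, CA m with hCAsdef
  have hCAs0 : 0 ≤ CAs := Finset.sum_nonneg (fun m _ => hCA0 m)
  set ε₁ : ℝ := c / (2 * (CAs + 1)) with hε₁def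
  have hε₁pos : 0 < ε₁ := by rw [hε₁def]; positivity
  -- psi difference
  have hψdiff : ∀ (v : Fin M → ℝ) m x,
      psifun f f' f'' v m x - psifun f f' f'' q m x = (v m - q m) * Afun f f' f'' m x := by
    intro v m x
    unfold psifun Afun
    ring
  -- K and the gap
  set K : Set ℝ := Set.Icc 0 Real.pi \ Set.Ioo (θs - r) (θs + r) with hKdef
  have hKcomp : IsCompact K := isCompact_Icc.diff isOpen_Ioo
  have hKne : K.Nonempty := by
    refine ⟨0, ⟨le_refl _, hπ.le⟩, ?_⟩
    intro h
    have := h.1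
    linarith
  obtain ⟨z, hzK, hzmax⟩ := hKcomp.exists_isMaxOn hKne (hgc q).continuousOn
  have hθsIcc : θs ∈ Set.Icc 0 Real.pi := ⟨hθ0.le, hθπ.le⟩
  have hgap : ∀ x ∈ Set.Icc (0:ℝ) Real.pi, x ≠ θs → gfun f q x < gfun f q θs := by
    intro x hx hne
    unfold gfun
    apply Finset.sum_lt_sum
    · intro m _
      exact gibbs_le (hf0 m θs) (hflt1 m θs) (hf0 m x) (hflt1 m x)
    · refine ⟨m0, Finset.mem_univ _, ?_⟩
      apply gibbs_lt (hf0 m0 θs) (hflt1 m0 θs) (hf0 m0 x) (hflt1 m0 x)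
      intro h
      exact hne (hinj hx hθsIcc h)
  have hzne : z ≠ θs := by
    intro h
    apply hzK.2
    rw [h]
    constructor <;> linarith
  set η : ℝ := gfun f q θs - gfun f q z with hηdef
  have hηpos : 0 < η := by
    rw [hηdef]
    have := hgap z hzK.1 hzne
    linarith
  -- uniform bound B on log terms
  set B : ℝ := (M : ℝ) * (2 * (-Real.log c0)) with hBdef
  have hlogc0 : Real.log c0 < 0 := Real.log_neg hc0 (by linarith)
  have hB0 : 0 ≤ B := by
    rw [hBdef]
    apply mul_nonneg (Nat.cast_nonneg _)
    nlinarith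
  have hlogbound : ∀ m x, |Real.log (f m x)| ≤ -Real.log c0 ∧
      |Real.log (1 - f m x)| ≤ -Real.log c0 := by
    intro m x
    have hb1 := (hb m x).1
    have hb2 := (hb m x).2
    have k1 : Real.log c0 ≤ Real.log (f m x) := Real.log_le_log hc0 hb1
    have k2 : Real.log (f m x) ≤ 0 := Real.log_nonpos (hf0 m x).le (by linarith)
    have k3 : Real.log c0 ≤ Real.log (1 - f m x) := Real.log_le_log hc0 (by linarith)
    have k4 : Real.log (1 - f m x) ≤ 0 := Real.log_nonpos (hf1 m x).le (by linarith)
    constructor <;> rw [abs_le] <;> constructor <;> linarith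
  have hgdiff : ∀ (v : Fin M → ℝ), (∀ m, |v m - q m| ≤ ε₁ ⊓ (η / (4 * (B + 1)))) → False ∨ True := by
    intro _ _; right; trivial
  set ε₂ : ℝ := η / (4 * (B + 1)) with hε₂def
  have hε₂pos : 0 < ε₂ := by rw [hε₂def]; positivity
  refine ⟨min ε₁ ε₂, lt_min hε₁pos hε₂pos, ?_⟩
  intro v hv
  have hvε₁ : ∀ m, |v m - q m| ≤ ε₁ := fun m => le_trans (hv m) (min_le_left _ _)
  have hvε₂ : ∀ m, |v m - q m| ≤ ε₂ := fun m => le_trans (hv m) (min_le_right _ _)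
  -- uniform closeness of g v to g q
  have hclose : ∀ x, |gfun f v x - gfun f q x| ≤ η / 4 := by
    intro x
    have h1 : gfun f v x - gfun f q x
        = ∑ m, (v m - q m) * (Real.log (f m x) - Real.log (1 - f m x)) := by
      unfold gfun
      rw [← Finset.sum_sub_distrib]
      apply Finset.sum_congr rfl
      intro m _
      ring
    rw [h1]
    calc |∑ m, (v m - q m) * (Real.log (f m x) - Real.log (1 - f m x))|
        ≤ ∑ m, |(v m - q m) * (Real.log (f m x) - Real.log (1 - f m x))| :=
          Finset.abs_sum_le_sum_abs _ _
      _ ≤ ∑ _m : Fin M, ε₂ * (2 * (-Real.log c0)) := by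
          apply Finset.sum_le_sum
          intro m _
          rw [abs_mul]
          apply mul_le_mul (hvε₂ m) _ (abs_nonneg _) hε₂pos.le
          obtain ⟨k1, k2⟩ := hlogbound m x
          calc |Real.log (f m x) - Real.log (1 - f m x)|
              ≤ |Real.log (f m x)| + |Real.log (1 - f m x)| := abs_sub _ _
            _ ≤ 2 * (-Real.log c0) := by linarith
      _ = (M : ℝ) * (ε₂ * (2 * (-Real.log c0))) := by
          rw [Finset.sum_const]; simp [mul_comm]
      _ ≤ η / 4 := by
          have : (M : ℝ) * (ε₂ * (2 * (-Real.log c0))) = ε₂ * B := by rw [hBdef]; ring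
          rw [this, hε₂def]
          rw [div_mul_eq_mul_div, div_le_div_iff₀ (by positivity) (by norm_num)]
          nlinarith
  -- strict concavity of g v on J
  have hconc : StrictConcaveOn ℝ J (gfun f v) := by
    apply strictConcaveOn_of_deriv2_neg (convex_Icc _ _) (hgc v).continuousOn
    intro x hx
    rw [interior_Icc] at hx
    have hxJ : x ∈ J := Set.Ioo_subset_Icc_self hx
    rw [hg2]
    have hsplit : ∑ m, psifun f f' f'' v m x
        = (∑ m, psifun f f' f'' q m x) + ∑ m, (v m - q m) * Afun f f' f'' m x := by
      rw [← Finset.sum_add_distrib]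
      apply Finset.sum_congr rfl
      intro m _
      have := hψdiff v m x
      linarith
    rw [hsplit]
    have h1 := hGJ x hxJ
    have h2 : ∑ m, (v m - q m) * Afun f f' f'' m x ≤ c / 2 := by
      calc ∑ m, (v m - q m) * Afun f f' f'' m x
          ≤ ∑ m, ε₁ * CA m := by
            apply Finset.sum_le_sum
            intro m _
            calc (v m - q m) * Afun f f' f'' m x
                ≤ |(v m - q m) * Afun f f' f'' m x| := le_abs_self _
              _ = |v m - q m| * |Afun f f' f'' m x| := abs_mul _ _
              _ ≤ ε₁ * CA m :=
                  mul_le_mul (hvε₁ m) (hCAspec m x hxJ) (abs_nonneg _) hε₁pos.le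
        _ = ε₁ * CAs := by rw [hCAsdef, Finset.mul_sum]
        _ ≤ c / 2 := by
            rw [hε₁def]
            rw [div_mul_eq_mul_div, div_le_div_iff₀ (by positivity) (by norm_num)]
            nlinarith
    linarith
  -- the maximizer
  have hJcomp : IsCompact J := isCompact_Icc
  obtain ⟨θhat, hθhatJ, hmax⟩ := hJcomp.exists_isMaxOn ⟨θs, hθsJ⟩ (hgc v).continuousOn
  -- values on K are small
  have hKle : ∀ x ∈ K, gfun f v x ≤ gfun f v θs - η / 2 := by
    intro x hxK
    have h1 := hclose x
    have h2 := hclose θs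
    have h3 : gfun f q x ≤ gfun f q z := hzmax hxK
    rw [abs_le] at h1 h2
    rw [hηdef] at *
    linarith [h1.2, h2.1]
  have hendpoints : (θs - r) ∈ K ∧ (θs + r) ∈ K := by
    constructor
    · exact ⟨⟨by linarith, by linarith⟩, fun h => by have := h.1; linarith⟩
    · exact ⟨⟨by linarith, by linarith⟩, fun h => by have := h.2; linarith⟩
  have hθsle : gfun f v θs ≤ gfun f v θhat := hmax hθsJ
  have hθhatIoo : θhat ∈ Set.Ioo (θs - r) (θs + r) := by
    obtain ⟨h1, h2⟩ := hθhatJ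
    constructor
    · rcases lt_or_eq_of_le h1 with h | h
      · exact h
      · exfalso
        have := hKle (θs - r) hendpoints.1
        rw [h] at this
        linarith
    · rcases lt_or_eq_of_le h2 with h | h
      · exact h
      · exfalso
        have := hKle (θs + r) hendpoints.2
        rw [← h] at this
        linarith
  refine ⟨θhat, ⟨by obtain ⟨h1, _⟩ := hθhatIoo; linarith,
    by obtain ⟨_, h2⟩ := hθhatIoo; linarith⟩, ?_, ?_⟩
  · rw [abs_sub_lt_iff]
    obtain ⟨h1, h2⟩ := hθhatIoo
    constructor <;> linarith
  · intro x hx hne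
    by_cases hxJ : x ∈ J
    · have hle : gfun f v x ≤ gfun f v θhat := hmax hxJ
      rcases lt_or_eq_of_le hle with h | h
      · exact h
      · exfalso
        have hmid : (1/2 : ℝ) • x + (1/2 : ℝ) • θhat ∈ J :=
          (convex_Icc _ _) hxJ hθhatJ (by norm_num) (by norm_num) (by norm_num)
        have hstrict := hconc.2 hxJ hθhatJ hne (by norm_num : (0:ℝ) < 1/2)
          (by norm_num : (0:ℝ) < 1/2) (by norm_num)
        have hle2 : gfun f v ((1/2 : ℝ) • x + (1/2 : ℝ) • θhat) ≤ gfun f v θhat := hmax hmid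
        rw [smul_eq_mul, smul_eq_mul] at hstrict
        rw [h] at hstrict
        have : gfun f v θhat < gfun f v ((1/2:ℝ) • x + (1/2:ℝ) • θhat) := by
          have e : (1/2:ℝ) * gfun f v θhat + (1/2:ℝ) * gfun f v θhat = gfun f v θhat := by ring
          rw [e] at hstrict
          exact hstrict
        linarith
    · have hxK : x ∈ K := ⟨hx, fun h => hxJ (Set.Ioo_subset_Icc_self h)⟩
      have := hKle x hxK
      linarith


private noncomputable def Ffun (p d : ℝ) (a : ℕ) (θ : ℝ) : ℝ :=
  if a % 2 = 1 then 1 / 2 - p ^ a / 2 * Real.cos ((a : ℝ) * θ)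
  else (d - 1) / d + p ^ a * (Real.sin ((a : ℝ) * θ / 2) ^ 2 - (d - 1) / d)

private lemma Ffun_bounds {p d : ℝ} (hp0 : 0 < p) (hp1 : p < 1) (hd : 2 ≤ d)
    (a : ℕ) (ha : 1 ≤ a) (x : ℝ) :
    (1 - p) / d ≤ Ffun p d a x ∧ Ffun p d a x ≤ 1 - (1 - p) / d := by
  have hd0 : (0:ℝ) < d := by linarith
  have hpa0 : 0 < p ^ a := pow_pos hp0 a
  have hpap : p ^ a ≤ p := by
    calc p ^ a ≤ p ^ 1 := pow_le_pow_of_le_one hp0.le hp1.le ha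
      _ = p := pow_one p
  have hkey : (1 - p) / d ≤ (1 - p) / 2 := by
    rw [div_le_div_iff₀ hd0 (by norm_num)]
    nlinarith
  unfold Ffun
  split_ifs with h
  · have hcos1 : Real.cos ((a:ℝ) * x) ≤ 1 := Real.cos_le_one _
    have hcosm1 : -1 ≤ Real.cos ((a:ℝ) * x) := Real.neg_one_le_cos _
    constructor
    · nlinarith [mul_le_mul_of_nonneg_left hcos1 (by linarith : (0:ℝ) ≤ p ^ a / 2)]
    · nlinarith [mul_le_mul_of_nonneg_left hcosm1 (by linarith : (0:ℝ) ≤ p ^ a / 2)]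
  · set s : ℝ := Real.sin ((a:ℝ) * x / 2) ^ 2 with hsdef
    have hs0 : 0 ≤ s := sq_nonneg _
    have hs1 : s ≤ 1 := Real.sin_sq_le_one _
    constructor
    · have expand : (d - 1) / d + p ^ a * (s - (d - 1) / d) - (1 - p) / d
          = ((d - 1) * (1 - p ^ a) + p ^ a * s * d - (1 - p)) / d := by
        field_simp
        ring
      have hnum : 0 ≤ (d - 1) * (1 - p ^ a) + p ^ a * s * d - (1 - p) := by
        have h1 : (1:ℝ) * (1 - p) ≤ (d - 1) * (1 - p ^ a) :=
          mul_le_mul (by linarith) (by linarith) (by linarith) (by linarith)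
        nlinarith [mul_nonneg (mul_nonneg hpa0.le hs0) hd0.le]
      nlinarith [div_nonneg hnum hd0.le]
    · have expand : 1 - (1 - p) / d - ((d - 1) / d + p ^ a * (s - (d - 1) / d))
          = (p - p ^ a * (s * d - d + 1)) / d := by
        field_simp
        ring
      have h1 : p ^ a * (s * d - d + 1) ≤ p ^ a * 1 :=
        mul_le_mul_of_nonneg_left (by nlinarith) hpa0.le
      have hnum : 0 ≤ p - p ^ a * (s * d - d + 1) := by nlinarith
      nlinarith [div_nonneg hnum hd0.le]

private lemma Ffun_hasDeriv (p d : ℝ) (a : ℕ) (x : ℝ) :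
    HasDerivAt (Ffun p d a) (p ^ a * ((a : ℝ) / 2) * Real.sin ((a : ℝ) * x)) x := by
  have hinner : HasDerivAt (fun y : ℝ => (a : ℝ) * y) ((a : ℝ)) x := by
    simpa using (hasDerivAt_id x).const_mul (a : ℝ)
  unfold Ffun
  split_ifs with h
  · have hcos : HasDerivAt (fun y => Real.cos ((a:ℝ) * y))
        (-Real.sin ((a:ℝ) * x) * (a:ℝ)) x :=
      (Real.hasDerivAt_cos _).comp x hinner
    have H := (hcos.const_mul (p ^ a / 2)).const_sub (1/2 : ℝ)
    refine H.congr_deriv ?_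
    ring
  · have hinner2 : HasDerivAt (fun y : ℝ => (a : ℝ) * y / 2) ((a : ℝ) / 2) x :=
      hinner.div_const 2
    have hsin : HasDerivAt (fun y => Real.sin ((a:ℝ) * y / 2))
        (Real.cos ((a:ℝ) * x / 2) * ((a:ℝ) / 2)) x :=
      (Real.hasDerivAt_sin _).comp x hinner2
    have hsq := hsin.pow 2
    have H := ((hsq.sub_const ((d-1)/d)).const_mul (p ^ a)).const_add ((d-1)/d)
    refine H.congr_deriv ?_
    have e : Real.sin ((a:ℝ) * x) = 2 * Real.sin ((a:ℝ) * x / 2) * Real.cos ((a:ℝ) * x / 2) := by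
      rw [← Real.sin_two_mul]
      congr 1
      ring
    rw [e]
    norm_num
    ring

private lemma Ffun_hasDeriv2 (p : ℝ) (a : ℕ) (x : ℝ) :
    HasDerivAt (fun y => p ^ a * ((a : ℝ) / 2) * Real.sin ((a : ℝ) * y))
      (p ^ a * ((a : ℝ) ^ 2 / 2) * Real.cos ((a : ℝ) * x)) x := by
  have hinner : HasDerivAt (fun y : ℝ => (a : ℝ) * y) ((a : ℝ)) x := by
    simpa using (hasDerivAt_id x).const_mul (a : ℝ)
  have hsin : HasDerivAt (fun y => Real.sin ((a:ℝ) * y))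
      (Real.cos ((a:ℝ) * x) * (a:ℝ)) x :=
    (Real.hasDerivAt_sin _).comp x hinner
  have H := hsin.const_mul (p ^ a * ((a : ℝ) / 2))
  refine H.congr_deriv ?_
  ring



private lemma wsum (N : ℕ) {q : ℝ} (h0 : 0 ≤ q) (h1 : q ≤ 1) :
    (∑ k : Fin (N+1), (N.choose (k:ℕ):ℝ) * q^(k:ℕ) * (1-q)^(N-(k:ℕ))) = 1 := by
  have h := bernstein.probability N ⟨q, h0, h1⟩
  have e : ∀ k : Fin (N+1), (N.choose (k:ℕ):ℝ) * q^(k:ℕ) * (1-q)^(N-(k:ℕ))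
      = bernstein N (k:ℕ) ⟨q, h0, h1⟩ := by
    intro k
    rw [bernstein_apply]
  calc (∑ k : Fin (N+1), (N.choose (k:ℕ):ℝ) * q^(k:ℕ) * (1-q)^(N-(k:ℕ)))
      = ∑ k : Fin (N+1), bernstein N (k:ℕ) ⟨q, h0, h1⟩ :=
        Finset.sum_congr rfl (fun k _ => e k)
    _ = 1 := h

private lemma cheby (N : ℕ) (hN : 1 ≤ N) {q ε : ℝ} (h0 : 0 < q) (h1 : q < 1) (hε : 0 < ε) :
    (∑ k : Fin (N+1), if ε < |((k:ℕ):ℝ)/(N:ℝ) - q| then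
        (N.choose (k:ℕ):ℝ) * q^(k:ℕ) * (1-q)^(N-(k:ℕ)) else 0)
      ≤ 1/(4*ε^2*(N:ℝ)) := by
  have hNpos : 0 < N := hN
  have hN0 : (0:ℝ) < (N:ℝ) := by exact_mod_cast hNpos
  have hvar := bernstein.variance (n := N) hNpos.ne' ⟨q, h0.le, h1.le⟩
  have hvar' : (∑ k : Fin (N+1), (q - ((k:ℕ):ℝ)/(N:ℝ))^2 *
      ((N.choose (k:ℕ):ℝ) * q^(k:ℕ) * (1-q)^(N-(k:ℕ)))) = q * (1-q)/(N:ℝ) := by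
    have e2 : ∀ k : Fin (N+1), (q - ((k:ℕ):ℝ)/(N:ℝ))^2 *
        ((N.choose (k:ℕ):ℝ) * q^(k:ℕ) * (1-q)^(N-(k:ℕ)))
        = ((((⟨q, h0.le, h1.le⟩ : unitInterval)) : ℝ) - ((bernstein.z k : unitInterval) : ℝ))^2
          * bernstein N (k:ℕ) ⟨q, h0.le, h1.le⟩ := by
      intro k
      rw [bernstein_apply]
      rfl
    calc (∑ k : Fin (N+1), (q - ((k:ℕ):ℝ)/(N:ℝ))^2 *
        ((N.choose (k:ℕ):ℝ) * q^(k:ℕ) * (1-q)^(N-(k:ℕ))))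
        = ∑ k : Fin (N+1), ((((⟨q, h0.le, h1.le⟩ : unitInterval)) : ℝ)
            - ((bernstein.z k : unitInterval) : ℝ))^2 * bernstein N (k:ℕ) ⟨q, h0.le, h1.le⟩ :=
          Finset.sum_congr rfl (fun k _ => e2 k)
      _ = q * (1-q)/(N:ℝ) := hvar
  have hq14 : q * (1 - q) ≤ 1/4 := by nlinarith [sq_nonneg (q - 1/2)]
  calc (∑ k : Fin (N+1), if ε < |((k:ℕ):ℝ)/(N:ℝ) - q| then
        (N.choose (k:ℕ):ℝ) * q^(k:ℕ) * (1-q)^(N-(k:ℕ)) else 0)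
      ≤ ∑ k : Fin (N+1), ((q - ((k:ℕ):ℝ)/(N:ℝ))^2/ε^2) *
        ((N.choose (k:ℕ):ℝ) * q^(k:ℕ) * (1-q)^(N-(k:ℕ))) := by
        apply Finset.sum_le_sum
        intro k _
        have hw0 : 0 ≤ (N.choose (k:ℕ):ℝ) * q^(k:ℕ) * (1-q)^(N-(k:ℕ)) :=
          mul_nonneg (mul_nonneg (Nat.cast_nonneg _) (pow_nonneg h0.le _))
            (pow_nonneg (by linarith) _)
        split_ifs with hk
        · have h2 : ε^2 ≤ (q - ((k:ℕ):ℝ)/(N:ℝ))^2 := by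
            calc ε^2 ≤ |((k:ℕ):ℝ)/(N:ℝ) - q|^2 := pow_le_pow_left₀ hε.le hk.le 2
              _ = (q - ((k:ℕ):ℝ)/(N:ℝ))^2 := by rw [sq_abs]; ring
          have h3 : 1 ≤ (q - ((k:ℕ):ℝ)/(N:ℝ))^2/ε^2 := (one_le_div (by positivity)).mpr h2
          nlinarith
        · exact mul_nonneg (div_nonneg (sq_nonneg _) (sq_nonneg _)) hw0
    _ = (∑ k : Fin (N+1), (q - ((k:ℕ):ℝ)/(N:ℝ))^2 *
        ((N.choose (k:ℕ):ℝ) * q^(k:ℕ) * (1-q)^(N-(k:ℕ))))/ε^2 := by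
        rw [Finset.sum_div]
        apply Finset.sum_congr rfl
        intro k _
        ring
    _ = (q * (1-q)/(N:ℝ))/ε^2 := by rw [hvar']
    _ ≤ 1/(4*ε^2*(N:ℝ)) := by
        rw [div_div, div_le_div_iff₀ (by positivity) (by positivity)]
        nlinarith [mul_le_mul_of_nonneg_right hq14 (by positivity : (0:ℝ) ≤ ε^2*(N:ℝ))]

private lemma sum_pi_ite {M N : ℕ} (w : Fin M → Fin (N+1) → ℝ) (m : Fin M)
    (C : Fin (N+1) → Prop) [DecidablePred C]
    (hsum : ∀ j, j ≠ m → (∑ k : Fin (N+1), w j k) = 1) :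
    (∑ y : Fin M → Fin (N+1), if C (y m) then ∏ j, w j (y j) else 0)
      = ∑ k : Fin (N+1), if C k then w m k else 0 := by
  classical
  have h1 : ∀ y : Fin M → Fin (N+1), (if C (y m) then ∏ j, w j (y j) else 0)
      = ∏ j, (if j = m then (if C (y j) then w m (y j) else 0) else w j (y j)) := by
    intro y
    by_cases hC : C (y m)
    · rw [if_pos hC]
      apply Finset.prod_congr rfl
      intro j _
      by_cases hj : j = m
      · subst hj; simp [hC]
      · simp [hj]
    · rw [if_neg hC]
      symm
      apply Finset.prod_eq_zero (Finset.mem_univ m)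
      simp [hC]
  rw [Finset.sum_congr rfl (fun y _ => h1 y)]
  rw [← Fintype.prod_sum (f := fun j k => if j = m then (if C k then w m k else 0) else w j k)]
  rw [Finset.prod_eq_single m
    (fun j _ hj => by simp only [if_neg hj]; exact hsum j hj)
    (fun h => absurd (Finset.mem_univ m) h)]
  simp

private lemma prod_pow_eq_exp {M N : ℕ} (hN0 : (N:ℝ) ≠ 0) (f : Fin M → ℝ → ℝ) (θ : ℝ)
    (hg : ∀ m, 0 < f m θ) (hg1 : ∀ m, f m θ < 1) (y : Fin M → Fin (N+1)) :
    (∏ m, f m θ ^ ((y m : ℕ)) * (1 - f m θ) ^ (N - (y m : ℕ)))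
      = Real.exp ((N:ℝ) * gfun f (fun m => ((y m : ℕ):ℝ)/(N:ℝ)) θ) := by
  unfold gfun
  rw [Finset.mul_sum, Real.exp_sum]
  apply Finset.prod_congr rfl
  intro m _
  have hk : (y m : ℕ) ≤ N := Nat.lt_succ_iff.mp (y m).isLt
  have e : (N:ℝ) * (((y m : ℕ):ℝ)/(N:ℝ) * Real.log (f m θ)
      + (1 - ((y m : ℕ):ℝ)/(N:ℝ)) * Real.log (1 - f m θ))
      = ((y m : ℕ):ℝ) * Real.log (f m θ) + ((N - (y m : ℕ) : ℕ):ℝ) * Real.log (1 - f m θ) := by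
    rw [Nat.cast_sub hk]
    field_simp
  rw [e, Real.exp_add, Real.exp_nat_mul, Real.exp_nat_mul, Real.exp_log (hg m),
    Real.exp_log (by linarith [hg1 m])]

/-- Appendix Lemma 2 (consistency of the joint maximum likelihood estimator):
for independent binomial data `Y^{(m)} ~ Bin(N, P_{α_m}(θ*))` with `α₁ = 1` and
`sin(α_m θ*) ≠ 0` for all `m`, with probability tending to 1 as `N → ∞` the
product likelihood attains a unique global maximum over `(0,π)` at a point
within `δ` of `θ*`. -/
theorem stmt_16 (p d θs : ℝ) (hp : p ∈ Set.Ioo (0 : ℝ) 1) (hd : 2 ≤ d)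
    (M : ℕ) (hM : 1 ≤ M) (α : Fin M → ℕ)
    (hα1 : α ⟨0, hM⟩ = 1)
    (hαpos : ∀ m : Fin M, 1 ≤ α m)
    (hsin : ∀ m : Fin M, Real.sin ((α m : ℝ) * θs) ≠ 0)
    (P : ℕ → ℝ → ℝ)
    (hP : ∀ (a : ℕ) (θ : ℝ), P a θ =
      if a % 2 = 1 then 1 / 2 - p ^ a / 2 * Real.cos ((a : ℝ) * θ)
      else (d - 1) / d + p ^ a * (Real.sin ((a : ℝ) * θ / 2) ^ 2 - (d - 1) / d))
    (hθs : θs ∈ Set.Ioo 0 Real.pi)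
    (δ : ℝ) (hδ : 0 < δ) :
    Tendsto (fun N : ℕ => ∑ y : Fin M → Fin (N + 1),
      if (∃ θhat ∈ Set.Ioo (0 : ℝ) Real.pi,
          (∀ θ ∈ Set.Ioo (0 : ℝ) Real.pi,
            ∏ m, P (α m) θ ^ (y m : ℕ) * (1 - P (α m) θ) ^ (N - (y m : ℕ)) ≤
              ∏ m, P (α m) θhat ^ (y m : ℕ) * (1 - P (α m) θhat) ^ (N - (y m : ℕ))) ∧
          (∀ θ' ∈ Set.Ioo (0 : ℝ) Real.pi,
            (∏ m, P (α m) θ' ^ (y m : ℕ) * (1 - P (α m) θ') ^ (N - (y m : ℕ))) =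
              (∏ m, P (α m) θhat ^ (y m : ℕ) * (1 - P (α m) θhat) ^ (N - (y m : ℕ))) →
              θ' = θhat) ∧
          |θhat - θs| < δ)
      then ∏ m, (N.choose (y m : ℕ) : ℝ) * P (α m) θs ^ (y m : ℕ)
            * (1 - P (α m) θs) ^ (N - (y m : ℕ))
      else 0)
      atTop (nhds 1) := by
  classical
  obtain ⟨hp0, hp1⟩ := hp
  obtain ⟨hθ0, hθπ⟩ := hθs
  have hd0 : (0:ℝ) < d := by linarith
  have hPF : P = Ffun p d := funext fun a => funext fun θ => hP a θ
  subst hPF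
  have hc0 : (0:ℝ) < (1 - p) / d := div_pos (by linarith) hd0
  have hc0' : (1 - p) / d ≤ 1 / 2 := by
    rw [div_le_iff₀ hd0]
    nlinarith
  have hbounds : ∀ (m : Fin M) (x : ℝ), (1-p)/d ≤ Ffun p d (α m) x
      ∧ Ffun p d (α m) x ≤ 1 - (1-p)/d :=
    fun m x => Ffun_bounds hp0 hp1 hd (α m) (hαpos m) x
  have hq0 : ∀ m : Fin M, 0 < Ffun p d (α m) θs :=
    fun m => lt_of_lt_of_le hc0 (hbounds m θs).1
  have hq1 : ∀ m : Fin M, Ffun p d (α m) θs < 1 :=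
    fun m => by have := (hbounds m θs).2; linarith
  set m0 : Fin M := ⟨0, hM⟩ with hm0def
  have hα1' : α m0 = 1 := hα1
  have hFm0 : ∀ x : ℝ, Ffun p d (α m0) x = 1/2 - p/2 * Real.cos x := by
    intro x
    rw [hα1']
    simp [Ffun]
  have hinj : Set.InjOn (Ffun p d (α m0)) (Set.Icc 0 Real.pi) := by
    intro x hx y hy hxy
    rw [hFm0 x, hFm0 y] at hxy
    have hp2 : p / 2 ≠ 0 := by positivity
    exact Real.injOn_cos hx hy (mul_left_cancel₀ hp2 (by linarith))
  have hder0 : p ^ (α m0) * ((α m0 : ℝ)/2) * Real.sin ((α m0 : ℝ) * θs) ≠ 0 := by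
    apply mul_ne_zero (mul_ne_zero (pow_ne_zero _ hp0.ne') ?_) (hsin m0)
    rw [hα1']
    norm_num
  obtain ⟨ε, hεpos, Hε⟩ := core_mle M (fun m => Ffun p d (α m))
    (fun m x => p ^ (α m) * ((α m : ℝ)/2) * Real.sin ((α m : ℝ) * x))
    (fun m x => p ^ (α m) * ((α m : ℝ)^2/2) * Real.cos ((α m : ℝ) * x))
    ((1-p)/d) hc0 hc0' hbounds
    (fun m x => Ffun_hasDeriv p d (α m) x)
    (fun m x => Ffun_hasDeriv2 p (α m) x)
    (fun m => continuous_const.mul (Real.continuous_cos.comp (continuous_const.mul continuous_id)))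
    θs hθ0 hθπ m0 hinj hder0 δ hδ
  have hbound : ∀ N : ℕ, 1 ≤ N →
      1 - (M:ℝ) * (1/(4*ε^2*(N:ℝ))) ≤ (∑ y : Fin M → Fin (N + 1),
        if (∃ θhat ∈ Set.Ioo (0 : ℝ) Real.pi,
          (∀ θ ∈ Set.Ioo (0 : ℝ) Real.pi,
            ∏ m, Ffun p d (α m) θ ^ (y m : ℕ) * (1 - Ffun p d (α m) θ) ^ (N - (y m : ℕ)) ≤
              ∏ m, Ffun p d (α m) θhat ^ (y m : ℕ) * (1 - Ffun p d (α m) θhat) ^ (N - (y m : ℕ))) ∧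
          (∀ θ' ∈ Set.Ioo (0 : ℝ) Real.pi,
            (∏ m, Ffun p d (α m) θ' ^ (y m : ℕ) * (1 - Ffun p d (α m) θ') ^ (N - (y m : ℕ))) =
              (∏ m, Ffun p d (α m) θhat ^ (y m : ℕ) * (1 - Ffun p d (α m) θhat) ^ (N - (y m : ℕ))) →
              θ' = θhat) ∧
          |θhat - θs| < δ)
        then ∏ m, (N.choose (y m : ℕ) : ℝ) * Ffun p d (α m) θs ^ (y m : ℕ) * (1 - Ffun p d (α m) θs) ^ (N - (y m : ℕ))
        else 0)
      ∧ (∑ y : Fin M → Fin (N + 1),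
        if (∃ θhat ∈ Set.Ioo (0 : ℝ) Real.pi,
          (∀ θ ∈ Set.Ioo (0 : ℝ) Real.pi,
            ∏ m, Ffun p d (α m) θ ^ (y m : ℕ) * (1 - Ffun p d (α m) θ) ^ (N - (y m : ℕ)) ≤
              ∏ m, Ffun p d (α m) θhat ^ (y m : ℕ) * (1 - Ffun p d (α m) θhat) ^ (N - (y m : ℕ))) ∧
          (∀ θ' ∈ Set.Ioo (0 : ℝ) Real.pi,
            (∏ m, Ffun p d (α m) θ' ^ (y m : ℕ) * (1 - Ffun p d (α m) θ') ^ (N - (y m : ℕ))) =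
              (∏ m, Ffun p d (α m) θhat ^ (y m : ℕ) * (1 - Ffun p d (α m) θhat) ^ (N - (y m : ℕ))) →
              θ' = θhat) ∧
          |θhat - θs| < δ)
        then ∏ m, (N.choose (y m : ℕ) : ℝ) * Ffun p d (α m) θs ^ (y m : ℕ) * (1 - Ffun p d (α m) θs) ^ (N - (y m : ℕ))
        else 0) ≤ 1 := by
    intro N hN
    have hNR : (1:ℝ) ≤ (N:ℝ) := by exact_mod_cast hN
    have hN0 : (0:ℝ) < (N:ℝ) := by linarith
    have hW0 : ∀ y : Fin M → Fin (N+1),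
        0 ≤ ∏ m, (N.choose (y m : ℕ) : ℝ) * Ffun p d (α m) θs ^ (y m : ℕ) * (1 - Ffun p d (α m) θs) ^ (N - (y m : ℕ)) := by
      intro y
      apply Finset.prod_nonneg
      intro m _
      exact mul_nonneg (mul_nonneg (Nat.cast_nonneg _) (pow_nonneg (hq0 m).le _))
        (pow_nonneg (by have := hq1 m; linarith) _)
    have hwsum : ∀ m : Fin M, (∑ k : Fin (N+1),
        (N.choose (k:ℕ):ℝ) * Ffun p d (α m) θs ^ (k:ℕ)
          * (1 - Ffun p d (α m) θs)^(N-(k:ℕ))) = 1 :=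
      fun m => wsum N (hq0 m).le (hq1 m).le
    have hWsum : (∑ y : Fin M → Fin (N + 1),
        ∏ m, (N.choose (y m : ℕ) : ℝ) * Ffun p d (α m) θs ^ (y m : ℕ) * (1 - Ffun p d (α m) θs) ^ (N - (y m : ℕ))) = 1 := by
      calc (∑ y : Fin M → Fin (N + 1), ∏ m, (N.choose (y m : ℕ) : ℝ) * Ffun p d (α m) θs ^ (y m : ℕ) * (1 - Ffun p d (α m) θs) ^ (N - (y m : ℕ)))
          = ∏ m : Fin M, ∑ k : Fin (N+1), (N.choose (k:ℕ):ℝ) * Ffun p d (α m) θs ^ (k:ℕ)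
              * (1 - Ffun p d (α m) θs)^(N-(k:ℕ)) :=
            (Fintype.prod_sum (f := fun (m : Fin M) (k : Fin (N+1)) =>
              (N.choose (k:ℕ):ℝ) * Ffun p d (α m) θs ^ (k:ℕ)
                * (1 - Ffun p d (α m) θs)^(N-(k:ℕ)))).symm
        _ = 1 := Finset.prod_eq_one (fun m _ => hwsum m)
    have hmarg : ∀ m : Fin M, (∑ y : Fin M → Fin (N+1),
        if ε < |((y m : ℕ):ℝ)/(N:ℝ) - Ffun p d (α m) θs| then
          ∏ j, (N.choose (y j : ℕ) : ℝ) * Ffun p d (α j) θs ^ (y j : ℕ) * (1 - Ffun p d (α j) θs) ^ (N - (y j : ℕ))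
        else 0)
        = ∑ k : Fin (N+1), if ε < |((k : ℕ):ℝ)/(N:ℝ) - Ffun p d (α m) θs| then
            (N.choose (k:ℕ):ℝ) * Ffun p d (α m) θs ^ (k:ℕ)
              * (1 - Ffun p d (α m) θs)^(N-(k:ℕ)) else 0 :=
      fun m => sum_pi_ite _ m (fun k : Fin (N+1) => ε < |((k : ℕ):ℝ)/(N:ℝ) - Ffun p d (α m) θs|) (fun j _ => hwsum j)
    have htail : ∀ m : Fin M, (∑ k : Fin (N+1),
        if ε < |((k : ℕ):ℝ)/(N:ℝ) - Ffun p d (α m) θs| then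
          (N.choose (k:ℕ):ℝ) * Ffun p d (α m) θs ^ (k:ℕ)
            * (1 - Ffun p d (α m) θs)^(N-(k:ℕ)) else 0) ≤ 1/(4*ε^2*(N:ℝ)) :=
      fun m => cheby N hN (hq0 m) (hq1 m) hεpos
    have hstep1 : ∀ y : Fin M → Fin (N+1),
        (∀ m, |((y m : ℕ):ℝ)/(N:ℝ) - Ffun p d (α m) θs| ≤ ε) →
        (∃ θhat ∈ Set.Ioo (0 : ℝ) Real.pi,
          (∀ θ ∈ Set.Ioo (0 : ℝ) Real.pi,
            ∏ m, Ffun p d (α m) θ ^ (y m : ℕ) * (1 - Ffun p d (α m) θ) ^ (N - (y m : ℕ)) ≤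
              ∏ m, Ffun p d (α m) θhat ^ (y m : ℕ) * (1 - Ffun p d (α m) θhat) ^ (N - (y m : ℕ))) ∧
          (∀ θ' ∈ Set.Ioo (0 : ℝ) Real.pi,
            (∏ m, Ffun p d (α m) θ' ^ (y m : ℕ) * (1 - Ffun p d (α m) θ') ^ (N - (y m : ℕ))) =
              (∏ m, Ffun p d (α m) θhat ^ (y m : ℕ) * (1 - Ffun p d (α m) θhat) ^ (N - (y m : ℕ))) →
              θ' = θhat) ∧
          |θhat - θs| < δ) := by
      intro y hy
      obtain ⟨θhat, hIoo, hδ', hstrict⟩ := Hε (fun m => ((y m : ℕ):ℝ)/(N:ℝ)) hy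
      have hLike : ∀ θ : ℝ, (∏ m, Ffun p d (α m) θ ^ (y m : ℕ)
            * (1 - Ffun p d (α m) θ) ^ (N - (y m : ℕ)))
          = Real.exp ((N:ℝ) * gfun (fun m => Ffun p d (α m))
              (fun m => ((y m : ℕ):ℝ)/(N:ℝ)) θ) :=
        fun θ => prod_pow_eq_exp hN0.ne' (fun m => Ffun p d (α m)) θ
          (fun m => lt_of_lt_of_le hc0 (hbounds m θ).1)
          (fun m => by have := (hbounds m θ).2; linarith) y
      refine ⟨θhat, hIoo, ?_, ?_, hδ'⟩
      · intro θ hθ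
        rw [hLike θ, hLike θhat]
        apply Real.exp_le_exp.mpr
        refine mul_le_mul_of_nonneg_left ?_ hN0.le
        rcases eq_or_ne θ θhat with h | h
        · rw [h]
        · exact (hstrict θ (Set.Ioo_subset_Icc_self hθ) h).le
      · intro θ' hθ' heq
        by_contra hne
        have hlt := hstrict θ' (Set.Ioo_subset_Icc_self hθ') hne
        rw [hLike θ', hLike θhat] at heq
        have hc := Real.exp_lt_exp.mpr (mul_lt_mul_of_pos_left hlt hN0)
        rw [heq] at hc
        exact lt_irrefl _ hc
    constructor
    · have hpoint : ∀ y : Fin M → Fin (N+1),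
          (∏ m, (N.choose (y m : ℕ) : ℝ) * Ffun p d (α m) θs ^ (y m : ℕ) * (1 - Ffun p d (α m) θs) ^ (N - (y m : ℕ)))
            - (∑ m : Fin M, if ε < |((y m : ℕ):ℝ)/(N:ℝ) - Ffun p d (α m) θs| then
                (∏ j, (N.choose (y j : ℕ) : ℝ) * Ffun p d (α j) θs ^ (y j : ℕ) * (1 - Ffun p d (α j) θs) ^ (N - (y j : ℕ))) else 0)
          ≤ (if (∃ θhat ∈ Set.Ioo (0 : ℝ) Real.pi,
          (∀ θ ∈ Set.Ioo (0 : ℝ) Real.pi,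
            ∏ m, Ffun p d (α m) θ ^ (y m : ℕ) * (1 - Ffun p d (α m) θ) ^ (N - (y m : ℕ)) ≤
              ∏ m, Ffun p d (α m) θhat ^ (y m : ℕ) * (1 - Ffun p d (α m) θhat) ^ (N - (y m : ℕ))) ∧
          (∀ θ' ∈ Set.Ioo (0 : ℝ) Real.pi,
            (∏ m, Ffun p d (α m) θ' ^ (y m : ℕ) * (1 - Ffun p d (α m) θ') ^ (N - (y m : ℕ))) =
              (∏ m, Ffun p d (α m) θhat ^ (y m : ℕ) * (1 - Ffun p d (α m) θhat) ^ (N - (y m : ℕ))) →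
              θ' = θhat) ∧
          |θhat - θs| < δ)
            then ∏ m, (N.choose (y m : ℕ) : ℝ) * Ffun p d (α m) θs ^ (y m : ℕ) * (1 - Ffun p d (α m) θs) ^ (N - (y m : ℕ))
            else 0) := by
        intro y
        have hnn : ∀ m ∈ Finset.univ, (0:ℝ) ≤ if ε < |((y m : ℕ):ℝ)/(N:ℝ) - Ffun p d (α m) θs| then
            (∏ j, (N.choose (y j : ℕ) : ℝ) * Ffun p d (α j) θs ^ (y j : ℕ) * (1 - Ffun p d (α j) θs) ^ (N - (y j : ℕ))) else 0 := by
          intro m _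
          split_ifs
          · exact hW0 y
          · exact le_refl 0
        by_cases hE : (∃ θhat ∈ Set.Ioo (0 : ℝ) Real.pi,
          (∀ θ ∈ Set.Ioo (0 : ℝ) Real.pi,
            ∏ m, Ffun p d (α m) θ ^ (y m : ℕ) * (1 - Ffun p d (α m) θ) ^ (N - (y m : ℕ)) ≤
              ∏ m, Ffun p d (α m) θhat ^ (y m : ℕ) * (1 - Ffun p d (α m) θhat) ^ (N - (y m : ℕ))) ∧
          (∀ θ' ∈ Set.Ioo (0 : ℝ) Real.pi,
            (∏ m, Ffun p d (α m) θ' ^ (y m : ℕ) * (1 - Ffun p d (α m) θ') ^ (N - (y m : ℕ))) =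
              (∏ m, Ffun p d (α m) θhat ^ (y m : ℕ) * (1 - Ffun p d (α m) θhat) ^ (N - (y m : ℕ))) →
              θ' = θhat) ∧
          |θhat - θs| < δ)
        · rw [if_pos hE]
          have h0 := Finset.sum_nonneg hnn
          linarith
        · rw [if_neg hE]
          have hex : ∃ m : Fin M, ε < |((y m : ℕ):ℝ)/(N:ℝ) - Ffun p d (α m) θs| := by
            by_contra h
            push_neg at h
            exact hE (hstep1 y h)
          obtain ⟨m1, hm1⟩ := hex
          have hle := Finset.single_le_sum hnn (Finset.mem_univ m1)
          rw [if_pos hm1] at hle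
          linarith
      calc 1 - (M:ℝ) * (1/(4*ε^2*(N:ℝ)))
          ≤ 1 - ∑ m : Fin M, ∑ k : Fin (N+1),
              (if ε < |((k : ℕ):ℝ)/(N:ℝ) - Ffun p d (α m) θs| then
                (N.choose (k:ℕ):ℝ) * Ffun p d (α m) θs ^ (k:ℕ)
                  * (1 - Ffun p d (α m) θs)^(N-(k:ℕ)) else 0) := by
            have h1 := Finset.sum_le_sum (fun m (_ : m ∈ Finset.univ) => htail m)
            rw [Finset.sum_const, Finset.card_univ, Fintype.card_fin, nsmul_eq_mul] at h1
            linarith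
        _ = 1 - ∑ m : Fin M, (∑ y : Fin M → Fin (N+1),
              if ε < |((y m : ℕ):ℝ)/(N:ℝ) - Ffun p d (α m) θs| then
                ∏ j, (N.choose (y j : ℕ) : ℝ) * Ffun p d (α j) θs ^ (y j : ℕ) * (1 - Ffun p d (α j) θs) ^ (N - (y j : ℕ))
              else 0) := by
            rw [Finset.sum_congr rfl (fun m _ => (hmarg m))]
        _ ≤ _ := by
            have hsum := Finset.sum_le_sum (fun y (_ : y ∈ Finset.univ) => hpoint y)
            rw [Finset.sum_sub_distrib, hWsum, Finset.sum_comm] at hsum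
            exact hsum
    · calc (∑ y : Fin M → Fin (N + 1),
          if (∃ θhat ∈ Set.Ioo (0 : ℝ) Real.pi,
          (∀ θ ∈ Set.Ioo (0 : ℝ) Real.pi,
            ∏ m, Ffun p d (α m) θ ^ (y m : ℕ) * (1 - Ffun p d (α m) θ) ^ (N - (y m : ℕ)) ≤
              ∏ m, Ffun p d (α m) θhat ^ (y m : ℕ) * (1 - Ffun p d (α m) θhat) ^ (N - (y m : ℕ))) ∧
          (∀ θ' ∈ Set.Ioo (0 : ℝ) Real.pi,
            (∏ m, Ffun p d (α m) θ' ^ (y m : ℕ) * (1 - Ffun p d (α m) θ') ^ (N - (y m : ℕ))) =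
              (∏ m, Ffun p d (α m) θhat ^ (y m : ℕ) * (1 - Ffun p d (α m) θhat) ^ (N - (y m : ℕ))) →
              θ' = θhat) ∧
          |θhat - θs| < δ)
          then ∏ m, (N.choose (y m : ℕ) : ℝ) * Ffun p d (α m) θs ^ (y m : ℕ) * (1 - Ffun p d (α m) θs) ^ (N - (y m : ℕ))
          else 0)
          ≤ ∑ y : Fin M → Fin (N + 1), ∏ m, (N.choose (y m : ℕ) : ℝ) * Ffun p d (α m) θs ^ (y m : ℕ) * (1 - Ffun p d (α m) θs) ^ (N - (y m : ℕ)) := by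
            apply Finset.sum_le_sum
            intro y _
            split_ifs
            · exact le_refl _
            · exact hW0 y
      _ = 1 := hWsum
  apply tendsto_of_tendsto_of_tendsto_of_le_of_le'
    (g := fun N : ℕ => 1 - (M:ℝ) * (1/(4*ε^2*(N:ℝ)))) (h := fun _ : ℕ => (1:ℝ))
  · have h1 : Tendsto (fun N : ℕ => 1/(4*ε^2*(N:ℝ))) atTop (nhds 0) := by
      have he : (fun N : ℕ => 1/(4*ε^2*(N:ℝ))) = fun N : ℕ => (1/(4*ε^2)) * (1/(N:ℝ)) := by
        funext N
        rw [one_div, one_div, one_div, mul_inv]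
      rw [he]
      have h := tendsto_one_div_atTop_nhds_zero_nat.const_mul (1/(4*ε^2))
      rw [mul_zero] at h
      exact h
    have h2 : Tendsto (fun N : ℕ => 1 - (M:ℝ) * (1/(4*ε^2*(N:ℝ)))) atTop
        (nhds (1 - (M:ℝ) * 0)) := tendsto_const_nhds.sub (h1.const_mul (M:ℝ))
    simpa using h2
  · exact tendsto_const_nhds
  · filter_upwards [eventually_ge_atTop 1] with N hN
    exact (hbound N hN).1
  · filter_upwards [eventually_ge_atTop 1] with N hN
    exact (hbound N hN).2
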